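/- Every morphism of the free monoidal category generated by a type C is an isomorphism; that is, the free monoidal category over a type is a groupoid. -/

import Mathlib

open CategoryTheory MonoidalCategory

private theorem free_monoidal_hom_isIso {C : Type u} {X Y : FreeMonoidalCategory C}
    (f : FreeMonoidalCategory.Hom X Y) : IsIso (show X ⟶ Y from Quotient.mk (FreeMonoidalCategory.setoidHom X Y) f) := by
  induction f with
  | id X => exact inferInstanceAs (IsIso (𝟙 X))
  | α_hom X Y Z => exact inferInstanceAs (IsIso (α_ X Y Z).hom)
  | α_inv X Y Z => exact inferInstanceAs (IsIso (α_ X Y Z).inv)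
  | l_hom X => exact inferInstanceAs (IsIso (λ_ X).hom)
  | l_inv X => exact inferInstanceAs (IsIso (λ_ X).inv)
  | ρ_hom X => exact inferInstanceAs (IsIso (ρ_ X).hom)
  | ρ_inv X => exact inferInstanceAs (IsIso (ρ_ X).inv)
  | comp f g hf hg => exact @IsIso.comp_isIso _ _ _ _ _ ⟦f⟧ ⟦g⟧ hf (by exact hg)
  | whiskerLeft X f hf =>
      exact @whiskerLeft_isIso _ _ _ X _ _ ⟦f⟧ hf
  | whiskerRight f Y hf =>
      exact @whiskerRight_isIso _ _ _ _ _ ⟦f⟧ Y hf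
  | tensor f g hf hg =>
      exact @MonoidalCategory.tensor_isIso _ _ _ _ _ _ _ ⟦f⟧ hf ⟦g⟧ (by exact hg)

/-- Every morphism in the free monoidal category generated by a type is an
isomorphism: the free monoidal category is a groupoid. -/
theorem free_monoidal_category_isIso (C : Type u)
    {X Y : FreeMonoidalCategory C} (f : X ⟶ Y) : IsIso f := by
  obtain ⟨f⟩ := f
  exact free_monoidal_hom_isIso f
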